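/- Let S be a complete RN module over ℝ with base (Ω, F, P) and let (G_n)_{n∈ℕ} be a sequence in F̃ with G_n ⊂ H(S), P(G_n) > 0 and Rank_{G_n}(S) ≥ 2 for every n. Then Rank_G(S) ≥ 2, where G = ∪_{n≥1} G_n; indeed, there exist x, y ∈ S that are L⁰-independent on G. -/

import Mathlib

open MeasureTheory Filter Set

noncomputable section

namespace RNM

variable {Ω : Type*} [MeasurableSpace Ω]

/-- `L⁰(F, ℝ)`: equivalence classes of real random variables mod a.e. equality. -/
abbrev L0 (μ : Measure Ω) : Type _ := Ω →ₘ[μ] ℝ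

open Classical in
/-- The equivalence class of the indicator function of a (measurable) set. -/
noncomputable def ind (μ : Measure Ω) (A : Set Ω) : L0 μ :=
  if h : MeasurableSet A then
    AEEqFun.mk (A.indicator fun _ => (1 : ℝ)) (aestronglyMeasurable_const.indicator h)
  else 0

/-- The constant function, as an element of `L⁰`. -/
noncomputable def cst (μ : Measure Ω) (r : ℝ) : L0 μ := AEEqFun.const Ω r

/-- `A ⊂ B` modulo null sets. -/
def aeSub (μ : Measure Ω) (A B : Set Ω) : Prop := μ (A \ B) = 0

/-- `A = B` modulo null sets. -/
def aeEqS (μ : Measure Ω) (A B : Set Ω) : Prop := μ ((A \ B) ∪ (B \ A)) = 0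

variable {μ : Measure Ω} {S : Type*} [AddCommGroup S]

/-- The axioms of a random normed module over ℝ with base `(Ω, F, μ)`: `S` is a left module
over the algebra `L⁰(F,ℝ)` (with module multiplication `sm`) and `nrm` is an `L⁰`-norm. -/
structure IsRNModule (μ : Measure Ω) (sm : L0 μ → S → S) (nrm : S → L0 μ) : Prop where
  smul_add : ∀ ξ x y, sm ξ (x + y) = sm ξ x + sm ξ y
  add_smul : ∀ ξ η x, sm (ξ + η) x = sm ξ x + sm η x
  mul_smul : ∀ ξ η x, sm (ξ * η) x = sm ξ (sm η x)
  one_smul : ∀ x, sm 1 x = x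
  nrm_nonneg : ∀ x, 0 ≤ nrm x
  nrm_smul : ∀ ξ x, nrm (sm ξ x) = |ξ| * nrm x
  nrm_add : ∀ x y, nrm (x + y) ≤ nrm x + nrm y
  nrm_eq_zero : ∀ x, nrm x = 0 → x = 0

/-- `x` and `y` are `L⁰`-independent on `F`. -/
def Indep (sm : L0 μ → S → S) (x y : S) (F : Set Ω) : Prop :=
  ∀ ξ η : L0 μ, sm (ξ * ind μ F) x + sm (η * ind μ F) y = 0 →
    ξ * ind μ F = 0 ∧ η * ind μ F = 0

/-- `Rank_D(S) ≥ 2`. -/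
def RankGe2 (sm : L0 μ → S → S) (D : Set Ω) : Prop := ∃ x y : S, Indep sm x y D

/-- `A_x = [‖x‖ > 0]`. -/
def Aset (nrm : S → L0 μ) (x : S) : Set Ω := {ω | 0 < (nrm x) ω}

/-- `A_{xy} = A_x ∩ A_y`. -/
def Axy (nrm : S → L0 μ) (x y : S) : Set Ω := Aset nrm x ∩ Aset nrm y

/-- `B_{xy} = A_{xy} ∩ A_{x-y}`. -/
def Bxy (nrm : S → L0 μ) (x y : S) : Set Ω := Axy nrm x y ∩ Aset nrm (x - y)

/-- `H` is (a representative of) the support `H(S) = [⋁{‖x‖ : x ∈ S} > 0]`. -/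
def IsSupport (nrm : S → L0 μ) (H : Set Ω) : Prop :=
  MeasurableSet H ∧ (∀ x : S, aeSub μ (Aset nrm x) H) ∧
    ∀ B : Set Ω, MeasurableSet B → aeSub μ B H → 0 < μ B →
      ∃ x : S, 0 < μ (B ∩ Aset nrm x)

/-- A sequence in `S` is Cauchy for the topology of convergence in probability. -/
def CauchyInProb (μ : Measure Ω) (nrm : S → L0 μ) (u : ℕ → S) : Prop :=
  ∀ ε : ℝ, 0 < ε →
    Tendsto (fun p : ℕ × ℕ => μ {ω | ε ≤ |(nrm (u p.1 - u p.2)) ω|}) atTop (nhds 0)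

/-- `u n → x` in probability (i.e. `‖u n - x‖ → 0` in probability). -/
def TendstoInProb (μ : Measure Ω) (nrm : S → L0 μ) (u : ℕ → S) (x : S) : Prop :=
  ∀ ε : ℝ, 0 < ε →
    Tendsto (fun n => μ {ω | ε ≤ |(nrm (u n - x)) ω|}) atTop (nhds 0)

/-- Completeness of a random normed module. -/
def CompleteRN (μ : Measure Ω) (nrm : S → L0 μ) : Prop :=
  ∀ u : ℕ → S, CauchyInProb μ nrm u → ∃ x : S, TendstoInProb μ nrm u x

/-- The random unit sphere `S(1)`. -/
def sphere (nrm : S → L0 μ) : Set S :=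
  {x | ∃ A : Set Ω, MeasurableSet A ∧ 0 < μ A ∧ nrm x = ind μ A}

/-- The random closed unit ball `U(1)`. -/
def ball (nrm : S → L0 μ) : Set S := {x | nrm x ≤ 1}

/-- `ε` is an admissible random convexity parameter on `D`: `ε ≥ 0` and `0 < ε ≤ 2` on `D`. -/
def Admissible (μ : Measure Ω) (D : Set Ω) (ε : L0 μ) : Prop :=
  0 ≤ ε ∧ ∀ᵐ ω ∂μ, ω ∈ D → 0 < ε ω ∧ ε ω ≤ 2

/-- midpoint `(x+y)/2`. -/
def mid (μ : Measure Ω) (sm : L0 μ → S → S) (x y : S) : S := sm (cst μ (1/2)) (x + y)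

/-- The set whose infimum (in the a.s. order of `L⁰`) is the modulus of random
convexity `δ_D(ε)`. -/
def modSet (μ : Measure Ω) (sm : L0 μ → S → S) (nrm : S → L0 μ) (D : Set Ω) (ε : L0 μ) :
    Set (L0 μ) :=
  {z | ∃ x ∈ sphere nrm, ∃ y ∈ sphere nrm, aeSub μ D (Bxy nrm x y) ∧
    ε * ind μ D ≤ ind μ D * nrm (x - y) ∧
    z = ind μ D - ind μ D * nrm (mid μ sm x y)}

/-- `S` is random uniformly convex: `δ_{H(S)}(ε) > 0` on `H(S)` for every admissible `ε`. -/
def RandomUniformlyConvex (μ : Measure Ω) (sm : L0 μ → S → S) (nrm : S → L0 μ)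
    (H : Set Ω) : Prop :=
  ∀ ε : L0 μ, Admissible μ H ε → ∀ d : L0 μ, IsGLB (modSet μ sm nrm H ε) d →
    ∀ᵐ ω ∂μ, ω ∈ H → 0 < d ω

/-- `G` is (a representative of) `G(S)`. -/
def IsGSet (μ : Measure Ω) (sm : L0 μ → S → S) (H G : Set Ω) : Prop :=
  MeasurableSet G ∧ aeSub μ G H ∧ 0 < μ G ∧ RankGe2 sm G ∧
    ∀ D : Set Ω, MeasurableSet D → aeSub μ D (H \ G) → 0 < μ D → ¬ RankGe2 sm D


section Aux

variable {Ω : Type*} [MeasurableSpace Ω] {μ : Measure Ω} {S : Type*} [AddCommGroup S]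
variable {sm : L0 μ → S → S} {nrm : S → L0 μ}

lemma L0.ext_ae {f g : L0 μ} (h : ⇑f =ᵐ[μ] ⇑g) : f = g := MeasureTheory.AEEqFun.ext h

lemma L0.coe_mul (f g : L0 μ) : ⇑(f * g) =ᵐ[μ] fun ω => f ω * g ω :=
  MeasureTheory.AEEqFun.coeFn_mul f g

lemma L0.coe_zero : ⇑(0 : L0 μ) =ᵐ[μ] fun _ => 0 := MeasureTheory.AEEqFun.coeFn_zero

lemma L0.coe_abs (f : L0 μ) : ⇑|f| =ᵐ[μ] fun ω => |f ω| := MeasureTheory.AEEqFun.coeFn_abs f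

lemma L0.coe_add (f g : L0 μ) : ⇑(f + g) =ᵐ[μ] fun ω => f ω + g ω :=
  MeasureTheory.AEEqFun.coeFn_add f g

lemma L0.coe_sum (s : Finset ℕ) (f : ℕ → L0 μ) :
    ⇑(∑ i ∈ s, f i) =ᵐ[μ] fun ω => ∑ i ∈ s, f i ω := by
  classical
  induction s using Finset.induction_on with
  | empty => simpa using L0.coe_zero
  | insert a s hnot ih =>
    filter_upwards [L0.coe_add (f a) (∑ i ∈ s, f i), ih] with ω h1 h2
    rw [Finset.sum_insert hnot, h1, Finset.sum_insert hnot, h2]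

lemma L0.le_iff {f g : L0 μ} : f ≤ g ↔ ∀ᵐ ω ∂μ, f ω ≤ g ω := by
  rw [← MeasureTheory.AEEqFun.coeFn_le]; rfl

lemma ind_coe {A : Set Ω} (hA : MeasurableSet A) :
    ⇑(ind μ A) =ᵐ[μ] A.indicator fun _ => (1 : ℝ) := by
  rw [ind, dif_pos hA]; exact MeasureTheory.AEEqFun.coeFn_mk _ _

lemma ind_empty : ind μ (∅ : Set Ω) = 0 := by
  apply L0.ext_ae
  filter_upwards [ind_coe (MeasurableSet.empty (α := Ω)), L0.coe_zero (μ := μ)] with ω h1 h2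
  simp [h1, h2]

lemma ind_mul_ind {A B : Set Ω} (hA : MeasurableSet A) (hB : MeasurableSet B) :
    ind μ A * ind μ B = ind μ (A ∩ B) := by
  apply L0.ext_ae
  filter_upwards [L0.coe_mul (ind μ A) (ind μ B), ind_coe hA, ind_coe hB,
    ind_coe (hA.inter hB)] with ω h1 h2 h3 h4
  rw [h1, h2, h3, h4]
  by_cases hA' : ω ∈ A <;> by_cases hB' : ω ∈ B <;>
    simp [Set.indicator_apply, hA', hB', Set.mem_inter_iff]

lemma IsRNModule.zero_sm (h : IsRNModule μ sm nrm) (x : S) : sm 0 x = 0 := by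
  have h2 : sm 0 x + sm 0 x = sm 0 x := by rw [← h.add_smul]; norm_num
  exact add_eq_left.mp h2

lemma IsRNModule.sm_zero (h : IsRNModule μ sm nrm) (ξ : L0 μ) : sm ξ 0 = 0 := by
  have h2 : sm ξ 0 + sm ξ 0 = sm ξ 0 := by rw [← h.smul_add]; norm_num
  exact add_eq_left.mp h2

lemma IsRNModule.sm_neg (h : IsRNModule μ sm nrm) (ξ : L0 μ) (x : S) :
    sm ξ (-x) = -(sm ξ x) := by
  have h2 : sm ξ x + sm ξ (-x) = 0 := by rw [← h.smul_add]; simp [h.sm_zero]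
  exact eq_neg_of_add_eq_zero_left (by rw [add_comm]; exact h2)

lemma IsRNModule.sm_sub (h : IsRNModule μ sm nrm) (ξ : L0 μ) (x y : S) :
    sm ξ (x - y) = sm ξ x - sm ξ y := by
  rw [sub_eq_add_neg, h.smul_add, h.sm_neg, sub_eq_add_neg]

lemma IsRNModule.nrm_zero (h : IsRNModule μ sm nrm) : nrm (0 : S) = 0 := by
  have h2 := h.nrm_smul 0 0
  rw [h.zero_sm] at h2
  rw [h2]
  apply L0.ext_ae
  filter_upwards [L0.coe_mul |(0 : L0 μ)| (nrm (0:S)),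
    L0.coe_abs (0 : L0 μ), L0.coe_zero (μ := μ)] with ω hmul habs hzero
  rw [hmul, habs, hzero]
  simp

lemma IsRNModule.nrm_neg (h : IsRNModule μ sm nrm) (x : S) : nrm (-x) = nrm x := by
  have hneg : sm (-1) x = -x := by
    have h2 : sm 1 x + sm (-1) x = 0 := by
      rw [← h.add_smul]; simp [h.zero_sm]
    rw [h.one_smul] at h2
    exact eq_neg_of_add_eq_zero_left (by rw [add_comm]; exact h2)
  rw [← hneg, h.nrm_smul]
  apply L0.ext_ae
  filter_upwards [L0.coe_mul |(-1 : L0 μ)| (nrm x), L0.coe_abs (-1 : L0 μ),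
    MeasureTheory.AEEqFun.coeFn_neg (1 : L0 μ), MeasureTheory.AEEqFun.coeFn_one (μ := μ) (β := ℝ)]
    with ω hmul habs hneg1 hone
  rw [hmul, habs, hneg1]
  simp [hone]

lemma IsRNModule.ae_nrm_sum_le (h : IsRNModule μ sm nrm) (s : Finset ℕ) (f : ℕ → S) :
    ∀ᵐ ω ∂μ, (nrm (∑ i ∈ s, f i)) ω ≤ ∑ i ∈ s, (nrm (f i)) ω := by
  classical
  induction s using Finset.induction_on with
  | empty =>
    filter_upwards [L0.coe_zero (μ := μ)] with ω h0
    simp [h.nrm_zero, h0]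
  | insert a s hnot ih =>
    have htri := L0.le_iff.mp (h.nrm_add (f a) (∑ i ∈ s, f i))
    filter_upwards [htri, ih, L0.coe_add (nrm (f a)) (nrm (∑ i ∈ s, f i))] with ω h1 h2 h3
    rw [Finset.sum_insert hnot, Finset.sum_insert hnot]
    calc (nrm (f a + ∑ i ∈ s, f i)) ω ≤ (nrm (f a) + nrm (∑ i ∈ s, f i)) ω := h1
      _ = (nrm (f a)) ω + (nrm (∑ i ∈ s, f i)) ω := h3
      _ ≤ (nrm (f a)) ω + ∑ i ∈ s, (nrm (f i)) ω := by linarith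

end Aux

section Aux2

variable {Ω : Type*} [MeasurableSpace Ω] {μ : Measure Ω} {S : Type*} [AddCommGroup S]
variable {sm : L0 μ → S → S} {nrm : S → L0 μ}

lemma IsRNModule.sm_sum (h : IsRNModule μ sm nrm) (ξ : L0 μ) (s : Finset ℕ) (f : ℕ → S) :
    sm ξ (∑ i ∈ s, f i) = ∑ i ∈ s, sm ξ (f i) := by
  classical
  induction s using Finset.induction_on with
  | empty => simpa using h.sm_zero ξ
  | insert a s hnot ih =>
    rw [Finset.sum_insert hnot, h.smul_add, ih, Finset.sum_insert hnot]

lemma IsRNModule.ae_nrm_nonneg (h : IsRNModule μ sm nrm) (z : S) :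
    ∀ᵐ ω ∂μ, 0 ≤ (nrm z) ω := by
  filter_upwards [L0.le_iff.mp (h.nrm_nonneg z), L0.coe_zero (μ := μ)] with ω h1 h2
  calc (0:ℝ) = (0 : L0 μ) ω := h2.symm
    _ ≤ _ := h1

lemma IsRNModule.nrm_eq_zero_of_ae (h : IsRNModule μ sm nrm) {z : S}
    (hz : ∀ᵐ ω ∂μ, (nrm z) ω = 0) : z = 0 := by
  apply h.nrm_eq_zero
  apply L0.ext_ae
  filter_upwards [hz, L0.coe_zero (μ := μ)] with ω h1 h2
  rw [h1, h2]

lemma measure_le_of_ae_imp {s t : Set Ω} (h : ∀ᵐ ω ∂μ, ω ∈ s → ω ∈ t) : μ s ≤ μ t := by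
  calc μ s ≤ μ (s ∩ t) + μ (s \ t) := measure_le_inter_add_diff μ s t
    _ = μ (s ∩ t) := by
        have h0 : μ (s \ t) = 0 := by
          refine measure_mono_null ?_ (ae_iff.mp h)
          intro ω hω
          simp only [Set.mem_diff] at hω
          simp only [Set.mem_setOf_eq]
          tauto
        rw [h0, add_zero]
    _ ≤ μ t := measure_mono Set.inter_subset_right

lemma smul_limit_eq (h : IsRNModule μ sm nrm) {u : ℕ → S} {x : S}
    (hu : TendstoInProb μ nrm u x) {A : Set Ω} (hA : MeasurableSet A) {c : S}
    (hc : ∀ᶠ N in atTop, sm (ind μ A) (u N) = c) : sm (ind μ A) x = c := by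
  set e : L0 μ := nrm (sm (ind μ A) x - c) with he
  have key : ∀ N, sm (ind μ A) (u N) = c → ∀ᵐ ω ∂μ, e ω ≤ (nrm (u N - x)) ω := by
    intro N hN
    have hEq : sm (ind μ A) x - c = -(sm (ind μ A) (u N - x)) := by
      rw [h.sm_sub, hN]; abel
    have he2 : e = nrm (sm (ind μ A) (u N - x)) := by rw [he, hEq, h.nrm_neg]
    rw [he2, h.nrm_smul]
    filter_upwards [L0.coe_mul |ind μ A| (nrm (u N - x)), L0.coe_abs (ind μ A),
      ind_coe hA, h.ae_nrm_nonneg (u N - x)] with ω h1 h2 h3 h4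
    rw [h1, h2, h3]
    by_cases hω : ω ∈ A
    · simp [Set.indicator_of_mem hω]
    · simp [Set.indicator_of_notMem hω, h4]
  have step2 : ∀ ε : ℝ, 0 < ε → μ {ω | ε ≤ |e ω|} = 0 := by
    intro ε hε
    obtain ⟨N0, hN0⟩ := Filter.eventually_atTop.mp hc
    have hbound : ∀ᶠ N in atTop,
        μ {ω | ε ≤ |e ω|} ≤ μ {ω | ε ≤ |(nrm (u N - x)) ω|} := by
      refine Filter.eventually_atTop.mpr ⟨N0, fun N hN => ?_⟩
      refine measure_le_of_ae_imp ?_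
      filter_upwards [key N (hN0 N hN), h.ae_nrm_nonneg (sm (ind μ A) x - c)] with ω h1 h2 hs
      show ε ≤ |(nrm (u N - x)) ω|
      calc ε ≤ |e ω| := hs
        _ = e ω := abs_of_nonneg h2
        _ ≤ (nrm (u N - x)) ω := h1
        _ ≤ |(nrm (u N - x)) ω| := le_abs_self _
    have hL := ge_of_tendsto (hu ε hε) hbound
    exact nonpos_iff_eq_zero.mp hL
  have hzero : ∀ᵐ ω ∂μ, e ω = 0 := by
    have hU : μ {ω | ¬ e ω = 0} = 0 := by
      have hsub : {ω | ¬ e ω = 0} ⊆ ⋃ k : ℕ, {ω | 1/((k:ℝ)+1) ≤ |e ω|} := by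
        intro ω hω
        obtain ⟨k, hk⟩ := exists_nat_one_div_lt (abs_pos.mpr hω)
        exact Set.mem_iUnion.mpr ⟨k, le_of_lt hk⟩
      exact measure_mono_null hsub
        (measure_iUnion_null fun k => step2 _ (by positivity))
    rw [ae_iff]
    exact hU
  have : sm (ind μ A) x - c = 0 := h.nrm_eq_zero_of_ae hzero
  exact sub_eq_zero.mp this

end Aux2

/-- If `Rank_{G_n}(S) ≥ 2` for each member of a sequence `(G_n)` of positive-probability
subsets of `H(S)`, then `Rank_{∪ G_n}(S) ≥ 2`: there exist `x, y ∈ S` which are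
`L⁰`-independent on `∪_{n ≥ 1} G_n`. -/
theorem rankGe2_iUnion {Ω : Type*} [MeasurableSpace Ω] (μ : Measure Ω)
    [IsProbabilityMeasure μ] {S : Type*} [AddCommGroup S]
    (sm : L0 μ → S → S) (nrm : S → L0 μ) (hRN : IsRNModule μ sm nrm)
    (hcomp : CompleteRN μ nrm) (H : Set Ω) (hH : IsSupport nrm H)
    (G : ℕ → Set Ω) (hGm : ∀ n, MeasurableSet (G n)) (hGH : ∀ n, aeSub μ (G n) H)
    (hGpos : ∀ n, 0 < μ (G n)) (hGrk : ∀ n, RankGe2 sm (G n)) :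
    ∃ x y : S, Indep sm x y (⋃ n, G n) := by
  classical
  set D : ℕ → Set Ω := disjointed G with hDdef
  have hDm : ∀ n, MeasurableSet (D n) := MeasurableSet.disjointed hGm
  have hDsub : ∀ n, D n ⊆ G n := disjointed_subset G
  have hDdj : Pairwise (Function.onFun Disjoint D) := disjoint_disjointed G
  have hDU : (⋃ n, D n) = ⋃ n, G n := iUnion_disjointed
  choose xs ys hxy using hGrk
  -- tail sets
  set T : ℕ → Set Ω := fun m => ⋃ n, D (n + m) with hTdef
  have hTm : ∀ m, MeasurableSet (T m) := fun m => MeasurableSet.iUnion fun n => hDm _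
  have hDT : ∀ m n, m ≤ n → D n ⊆ T m := by
    intro m n hmn
    have hn : n = (n - m) + m := by omega
    rw [hn]
    exact Set.subset_iUnion (fun k => D (k + m)) (n - m)
  have hT_anti : Antitone T := by
    intro a b hab
    exact Set.iUnion_subset fun n => hDT a (n + b) (by omega)
  have hT_inter : (⋂ m, T m) = (∅ : Set Ω) := by
    ext ω
    simp only [Set.mem_iInter, Set.mem_empty_iff_false, iff_false]
    intro hω
    obtain ⟨n, hn⟩ := Set.mem_iUnion.mp (hω 0)
    obtain ⟨k, hk⟩ := Set.mem_iUnion.mp (hω (n + 0 + 1))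
    exact Set.disjoint_left.mp (hDdj (show n + 0 ≠ k + (n + 0 + 1) by omega)) hn hk
  have hT0 : Tendsto (fun m => μ (T m)) atTop (nhds 0) := by
    have ht := tendsto_measure_iInter_atTop (μ := μ)
      (fun m => (hTm m).nullMeasurableSet) hT_anti ⟨0, measure_ne_top μ _⟩
    rw [hT_inter] at ht
    simp only [measure_empty] at ht; exact ht
  -- partial sums with pairwise-disjoint supports are Cauchy in probability
  have cauchy : ∀ z : ℕ → S,
      CauchyInProb μ nrm (fun N => ∑ n ∈ Finset.range N, sm (ind μ (D n)) (z n)) := by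
    intro z ε hε
    set w : ℕ → S := fun N => ∑ n ∈ Finset.range N, sm (ind μ (D n)) (z n) with hw
    have main : ∀ M N, M ≤ N → ∀ᵐ ω ∂μ, ω ∉ T M → (nrm (w N - w M)) ω ≤ 0 := by
      intro M N hMN
      have hdiff : w N - w M = ∑ n ∈ Finset.Ico M N, sm (ind μ (D n)) (z n) :=
        (Finset.sum_Ico_eq_sub _ hMN).symm
      rw [hdiff]
      have hb := hRN.ae_nrm_sum_le (Finset.Ico M N) fun n => sm (ind μ (D n)) (z n)
      have hterm : ∀ᵐ ω ∂μ, ∀ n ∈ Finset.Ico M N,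
          ω ∉ D n → (nrm (sm (ind μ (D n)) (z n))) ω = 0 := by
        rw [Filter.eventually_all_finset]
        intro n _
        rw [hRN.nrm_smul]
        filter_upwards [L0.coe_mul |ind μ (D n)| (nrm (z n)), L0.coe_abs (ind μ (D n)),
          ind_coe (hDm n)] with ω h1 h2 h3 hn
        rw [h1, h2, h3]
        simp [Set.indicator_of_notMem hn]
      filter_upwards [hb, hterm] with ω h1 h2 hωT
      have hz : ∀ n ∈ Finset.Ico M N, (nrm (sm (ind μ (D n)) (z n))) ω = 0 := fun n hn =>
        h2 n hn fun hD => hωT (hDT M n (Finset.mem_Ico.mp hn).1 hD)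
      calc (nrm (∑ n ∈ Finset.Ico M N, sm (ind μ (D n)) (z n))) ω
          ≤ ∑ n ∈ Finset.Ico M N, (nrm (sm (ind μ (D n)) (z n))) ω := h1
        _ = 0 := Finset.sum_eq_zero hz
    have main2 : ∀ M N : ℕ, ∀ᵐ ω ∂μ, ω ∉ T (min M N) → (nrm (w M - w N)) ω ≤ 0 := by
      intro M N
      rcases le_total M N with hMN | hNM
      · have heq : nrm (w M - w N) = nrm (w N - w M) := by rw [← hRN.nrm_neg, neg_sub]
        rw [heq, min_eq_left hMN]
        exact main M N hMN
      · rw [min_eq_right hNM]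
        exact main N M hNM
    have hbnd : ∀ p : ℕ × ℕ,
        μ {ω | ε ≤ |(nrm (w p.1 - w p.2)) ω|} ≤ μ (T (min p.1 p.2)) := by
      intro p
      refine measure_le_of_ae_imp ?_
      filter_upwards [main2 p.1 p.2, hRN.ae_nrm_nonneg (w p.1 - w p.2)] with ω h1 h2 hs
      by_contra hT
      have h3 := h1 hT
      have h4 : (nrm (w p.1 - w p.2)) ω = 0 := le_antisymm h3 h2
      have h5 : ε ≤ |(nrm (w p.1 - w p.2)) ω| := hs
      rw [h4] at h5
      simp at h5
      linarith
    have hmin : Tendsto (fun p : ℕ × ℕ => min p.1 p.2) atTop atTop := by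
      refine Filter.tendsto_atTop_atTop.mpr fun b => ⟨(b, b), fun a ha => ?_⟩
      exact le_min ha.1 ha.2
    refine tendsto_of_tendsto_of_tendsto_of_le_of_le tendsto_const_nhds (hT0.comp hmin)
      (fun p => zero_le) hbnd
  obtain ⟨x, hx⟩ := hcomp _ (cauchy xs)
  obtain ⟨y, hy⟩ := hcomp _ (cauchy ys)
  -- identification of sm (ind (D n)) x
  have hconst : ∀ (z : ℕ → S) n N, n < N →
      sm (ind μ (D n)) (∑ k ∈ Finset.range N, sm (ind μ (D k)) (z k))
        = sm (ind μ (D n)) (z n) := by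
    intro z n N hnN
    rw [hRN.sm_sum]
    rw [Finset.sum_eq_single_of_mem n (Finset.mem_range.mpr hnN)]
    · rw [← hRN.mul_smul, ind_mul_ind (hDm n) (hDm n), Set.inter_self]
    · intro k _ hkn
      rw [← hRN.mul_smul, ind_mul_ind (hDm n) (hDm k),
        Set.disjoint_iff_inter_eq_empty.mp (hDdj (Ne.symm hkn)), ind_empty, hRN.zero_sm]
  have hxD : ∀ n, sm (ind μ (D n)) x = sm (ind μ (D n)) (xs n) := fun n =>
    smul_limit_eq hRN hx (hDm n)
      (Filter.eventually_atTop.mpr ⟨n + 1, fun N hN => hconst xs n N (by omega)⟩)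
  have hyD : ∀ n, sm (ind μ (D n)) y = sm (ind μ (D n)) (ys n) := fun n =>
    smul_limit_eq hRN hy (hDm n)
      (Filter.eventually_atTop.mpr ⟨n + 1, fun N hN => hconst ys n N (by omega)⟩)
  refine ⟨x, y, ?_⟩
  intro ξ η hξη
  have hGsm : MeasurableSet (⋃ n, G n) := MeasurableSet.iUnion hGm
  have hDG : ∀ n, D n ⊆ ⋃ m, G m := fun n =>
    (hDsub n).trans (Set.subset_iUnion G n)
  have hDn0 : ∀ n, ξ * ind μ (D n) = 0 ∧ η * ind μ (D n) = 0 := by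
    intro n
    have h0 : sm (ind μ (D n)) (sm (ξ * ind μ (⋃ m, G m)) x + sm (η * ind μ (⋃ m, G m)) y)
        = 0 := by rw [hξη, hRN.sm_zero]
    rw [hRN.smul_add, ← hRN.mul_smul, ← hRN.mul_smul] at h0
    have hrw : ∀ ζ : L0 μ, ind μ (D n) * (ζ * ind μ (⋃ m, G m)) = ζ * ind μ (D n) := by
      intro ζ
      rw [mul_comm (ind μ (D n)), mul_assoc, ind_mul_ind hGsm (hDm n),
        Set.inter_eq_self_of_subset_right (hDG n)]
    rw [hrw ξ, hrw η] at h0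
    have hx' : sm (ξ * ind μ (D n)) x = sm (ξ * ind μ (D n)) (xs n) := by
      rw [hRN.mul_smul, hxD n, ← hRN.mul_smul]
    have hy' : sm (η * ind μ (D n)) y = sm (η * ind μ (D n)) (ys n) := by
      rw [hRN.mul_smul, hyD n, ← hRN.mul_smul]
    rw [hx', hy'] at h0
    have hGn : ∀ ζ : L0 μ, (ζ * ind μ (D n)) * ind μ (G n) = ζ * ind μ (D n) := by
      intro ζ
      rw [mul_assoc, ind_mul_ind (hDm n) (hGm n),
        Set.inter_eq_self_of_subset_left (hDsub n)]
    have hind := hxy n (ξ * ind μ (D n)) (η * ind μ (D n)) (by rw [hGn ξ, hGn η]; exact h0)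
    rw [hGn ξ] at hind
    rw [hGn η] at hind
    exact hind
  have hfinal : ∀ ζ : L0 μ, (∀ n, ζ * ind μ (D n) = 0) → ζ * ind μ (⋃ m, G m) = 0 := by
    intro ζ hz
    apply L0.ext_ae
    have hae : ∀ᵐ ω ∂μ, ∀ n, ζ ω * (D n).indicator (fun _ => (1:ℝ)) ω = 0 := by
      rw [ae_all_iff]
      intro n
      have hcoe : ⇑(ζ * ind μ (D n)) = ⇑(0 : L0 μ) := by rw [hz n]
      filter_upwards [L0.coe_mul ζ (ind μ (D n)), ind_coe (hDm n), L0.coe_zero (μ := μ)]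
        with ω h1 h2 h3
      calc ζ ω * (D n).indicator (fun _ => (1:ℝ)) ω
          = ζ ω * (ind μ (D n)) ω := by rw [h2]
        _ = (ζ * ind μ (D n)) ω := h1.symm
        _ = (0 : L0 μ) ω := by rw [hcoe]
        _ = 0 := h3
    filter_upwards [hae, L0.coe_mul ζ (ind μ (⋃ m, G m)), ind_coe hGsm, L0.coe_zero (μ := μ)]
      with ω h1 h2 h3 h4
    rw [h2, h3, h4]
    by_cases hω : ω ∈ ⋃ m, G m
    · obtain ⟨n, hn⟩ := Set.mem_iUnion.mp (hDU ▸ hω : ω ∈ ⋃ n, D n)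
      have := h1 n
      rw [Set.indicator_of_mem hn] at this
      rw [Set.indicator_of_mem hω]
      simpa using this
    · rw [Set.indicator_of_notMem hω, mul_zero]
  exact ⟨hfinal ξ fun n => (hDn0 n).1, hfinal η fun n => (hDn0 n).2⟩


end RNM
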